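/- Define Λ_k(A) ∈ Q_n inductively by Λ_0(A) = 1, Λ_k(∅) = 0 for k ≥ 1, and Λ_k(A∪{i}) = Λ_k(A) + (Λ_1(A∪{i}) - Λ_1(A))·Λ_{k-1}(A) for i ∉ A. Then Λ_k(A) is well-defined (independent of the order in which elements of A are added), and for any σ in the symmetric group S_n with σ(A) = A, σ(Λ_k(A)) = Λ_k(A). -/

import Mathlib

namespace QnPaper

/-- The defining relations of the quadratic algebra `Q_n`:
for `A ⊆ {1,…,n}` and distinct `i, j ∉ A`,
`z_{A∪{i},j} + z_{A,i} = z_{A∪{j},i} + z_{A,j}` and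
`z_{A∪{i},j} * z_{A,i} = z_{A∪{j},i} * z_{A,j}`. -/
inductive QRel (k : Type) [Field k] (n : ℕ) :
    FreeAlgebra k (Finset (Fin n) × Fin n) → FreeAlgebra k (Finset (Fin n) × Fin n) → Prop
  | add_rel (A : Finset (Fin n)) (i j : Fin n) (hi : i ∉ A) (hj : j ∉ A) (hij : i ≠ j) :
      QRel k n (FreeAlgebra.ι k (insert i A, j) + FreeAlgebra.ι k (A, i))
        (FreeAlgebra.ι k (insert j A, i) + FreeAlgebra.ι k (A, j))
  | mul_rel (A : Finset (Fin n)) (i j : Fin n) (hi : i ∉ A) (hj : j ∉ A) (hij : i ≠ j) :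
      QRel k n (FreeAlgebra.ι k (insert i A, j) * FreeAlgebra.ι k (A, i))
        (FreeAlgebra.ι k (insert j A, i) * FreeAlgebra.ι k (A, j))

/-- The quadratic algebra `Q_n`. -/
abbrev Q (k : Type) [Field k] (n : ℕ) := RingQuot (QRel k n)

/-- The generator `z_{A,i}` of `Q_n` (only meaningful when `i ∉ A`). -/
def z (k : Type) [Field k] (n : ℕ) (A : Finset (Fin n)) (i : Fin n) : Q k n :=
  RingQuot.mkAlgHom k (QRel k n) (FreeAlgebra.ι k (A, i))

/-- `rAux s [i₁,…,i_r] = z_{s,i₁} + z_{s∪{i₁},i₂} + ⋯`. -/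
def rAux (k : Type) [Field k] (n : ℕ) (s : Finset (Fin n)) : List (Fin n) → Q k n
  | [] => 0
  | a :: l => z k n s a + rAux k n (insert a s) l

/-- `r(A) = z_{A,∅}`, computed using the increasing ordering of `A`. -/
def rFin (k : Type) [Field k] (n : ℕ) (A : Finset (Fin n)) : Q k n :=
  rAux k n ∅ (A.sort (· ≤ ·))

/-- `u(B) = z_{∅,B} = ∑_{D ⊆ B} (-1)^{|B|-|D|} r(D)`. -/
def uFin (k : Type) [Field k] (n : ℕ) (B : Finset (Fin n)) : Q k n :=
  ∑ D ∈ B.powerset, (-1 : Q k n) ^ (B.card - D.card) * rFin k n D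
/-- `Λ_m` built along a list: `Λ_0 = 1`, `Λ_m(∅) = 0` for `m ≥ 1`, and
`Λ_m(A∪{a}) = Λ_m(A) + (Λ_1(A∪{a}) - Λ_1(A))·Λ_{m-1}(A)`, where `Λ_1 = r`. -/
def LamL (k : Type) [Field k] (n : ℕ) : ℕ → List (Fin n) → Q k n
  | 0, _ => 1
  | _ + 1, [] => 0
  | m + 1, a :: l =>
      LamL k n (m + 1) l
        + (rFin k n (insert a l.toFinset) - rFin k n l.toFinset) * LamL k n m l

/-- `Λ_m(A)`, computed by adding the elements of `A` in increasing order. -/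
def Lam (k : Type) [Field k] (n : ℕ) (m : ℕ) (A : Finset (Fin n)) : Q k n :=
  LamL k n m (A.sort (· ≤ ·))
variable (k : Type) [Field k] (n : ℕ)

lemma z_add_rel (A : Finset (Fin n)) (i j : Fin n) (hi : i ∉ A) (hj : j ∉ A) (hij : i ≠ j) :
    z k n (insert i A) j + z k n A i = z k n (insert j A) i + z k n A j := by
  have := RingQuot.mkAlgHom_rel k (QRel.add_rel (k := k) (n := n) A i j hi hj hij)
  simpa [z, map_add] using this

lemma z_mul_rel (A : Finset (Fin n)) (i j : Fin n) (hi : i ∉ A) (hj : j ∉ A) (hij : i ≠ j) :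
    z k n (insert i A) j * z k n A i = z k n (insert j A) i * z k n A j := by
  have := RingQuot.mkAlgHom_rel k (QRel.mul_rel (k := k) (n := n) A i j hi hj hij)
  simpa [z, map_mul] using this

lemma rAux_append (i : Fin n) : ∀ (l : List (Fin n)) (s : Finset (Fin n)),
    rAux k n s (l ++ [i]) = rAux k n s l + z k n (s ∪ l.toFinset) i
  | [], s => by simp [rAux]
  | a :: l, s => by
    have hset : insert a s ∪ l.toFinset = s ∪ (a :: l).toFinset := by
      ext x; simp [or_comm, or_left_comm, or_assoc]
    simp only [List.cons_append, rAux]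
    rw [rAux_append i l (insert a s), hset, add_assoc]

lemma rAux_perm {l₁ l₂ : List (Fin n)} (h : l₁.Perm l₂) :
    ∀ s : Finset (Fin n), l₁.Nodup → (∀ x ∈ l₁, x ∉ s) →
      rAux k n s l₁ = rAux k n s l₂ := by
  induction h with
  | nil => intro s _ _; rfl
  | cons a h ih =>
    intro s hnd hdis
    simp only [rAux]
    congr 1
    exact ih (insert a s) hnd.of_cons (fun x hx => by
      simp only [Finset.mem_insert, not_or]
      exact ⟨fun e => (List.nodup_cons.mp hnd).1 (e ▸ hx), hdis x (List.mem_cons_of_mem a hx)⟩)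
  | swap a b l =>
    intro s hnd hdis
    have hbs : b ∉ s := hdis b (by simp)
    have has : a ∉ s := hdis a (by simp)
    have hab : b ≠ a := by
      intro e; subst e; simp at hnd
    simp only [rAux]
    have hset : insert a (insert b s) = insert b (insert a s) := Finset.insert_comm _ _ _
    rw [hset, ← add_assoc, ← add_assoc]
    congr 1
    rw [add_comm (z k n s b), add_comm (z k n s a)]
    exact z_add_rel k n s b a hbs has hab
  | trans h₁ h₂ ih₁ ih₂ =>
    intro s hnd hdis
    rw [ih₁ s hnd hdis, ih₂ s (h₁.nodup_iff.mp hnd) (fun x hx => hdis x (h₁.mem_iff.mpr hx))]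

lemma perm_of_nodup_toFinset_eq {l₁ l₂ : List (Fin n)} (h₁ : l₁.Nodup) (h₂ : l₂.Nodup)
    (h : l₁.toFinset = l₂.toFinset) : l₁.Perm l₂ := by
  have := congrArg Finset.val h
  simp only [List.toFinset, Multiset.toFinset, Multiset.dedup_eq_self.mpr (Multiset.coe_nodup.mpr h₁),
    Multiset.dedup_eq_self.mpr (Multiset.coe_nodup.mpr h₂)] at this
  exact Multiset.coe_eq_coe.mp this

lemma rFin_insert (A : Finset (Fin n)) (i : Fin n) (hi : i ∉ A) :
    rFin k n (insert i A) = rFin k n A + z k n A i := by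
  have hperm : ((insert i A).sort (· ≤ ·)).Perm (A.sort (· ≤ ·) ++ [i]) := by
    apply perm_of_nodup_toFinset_eq n (Finset.sort_nodup _ _)
    · simp only [List.nodup_append, List.nodup_cons]
      refine ⟨Finset.sort_nodup _ _, by simp, ?_⟩
      intro x hx
      simp only [List.mem_singleton]
      intro _ e' e; subst e'; subst e
      exact hi (by simpa using hx)
    · ext x
      simp [Finset.mem_insert, or_comm]
  rw [rFin, rAux_perm k n hperm ∅ (Finset.sort_nodup _ _) (by simp), rAux_append]
  simp [rFin]

lemma ring_key {R : Type} [Ring R] (L L' L'' xa xb ya yb : R)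
    (h1 : ya + xb = yb + xa) (h2 : ya * xb = yb * xa) :
    (L + xb * L') + ya * (L' + xb * L'') = (L + xa * L') + yb * (L' + xa * L'') := by
  have h1' : xb + ya = xa + yb := by rw [add_comm xb, h1, add_comm]
  calc (L + xb * L') + ya * (L' + xb * L'')
      = L + ((xb + ya) * L' + (ya * xb) * L'') := by noncomm_ring
    _ = L + ((xa + yb) * L' + (yb * xa) * L'') := by rw [h1', h2]
    _ = (L + xa * L') + yb * (L' + xa * L'') := by noncomm_ring

lemma LamL_swap (a b : Fin n) (l : List (Fin n)) (hab : a ≠ b) (ha : a ∉ l) (hb : b ∉ l) :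
    ∀ m : ℕ, LamL k n m (a :: b :: l) = LamL k n m (b :: a :: l) := by
  set L := l.toFinset with hL
  have haL : a ∉ L := by simp [hL, ha]
  have hbL : b ∉ L := by simp [hL, hb]
  have haB : a ∉ insert b L := by simp [haL, hab]
  have hbA : b ∉ insert a L := by simp [hbL, Ne.symm hab]
  have hxb : rFin k n (insert b L) - rFin k n L = z k n L b := by
    rw [rFin_insert _ _ L b hbL]; exact add_sub_cancel_left _ _
  have hxa : rFin k n (insert a L) - rFin k n L = z k n L a := by
    rw [rFin_insert _ _ L a haL]; exact add_sub_cancel_left _ _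
  have hya : rFin k n (insert a (insert b L)) - rFin k n (insert b L) = z k n (insert b L) a := by
    rw [rFin_insert _ _ (insert b L) a haB]; exact add_sub_cancel_left _ _
  have hyb : rFin k n (insert b (insert a L)) - rFin k n (insert a L) = z k n (insert a L) b := by
    rw [rFin_insert _ _ (insert a L) b hbA]; exact add_sub_cancel_left _ _
  have h1 : z k n (insert b L) a + z k n L b = z k n (insert a L) b + z k n L a :=
    z_add_rel k n L b a hbL haL (Ne.symm hab)
  have h2 : z k n (insert b L) a * z k n L b = z k n (insert a L) b * z k n L a :=
    z_mul_rel k n L b a hbL haL (Ne.symm hab)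
  intro m
  match m with
  | 0 => rfl
  | 1 =>
    simp only [LamL, List.toFinset_cons, ← hL, mul_one, hxb, hxa, hya, hyb]
    rw [add_assoc, add_assoc, add_comm (z k n L b), add_comm (z k n L a), h1]
  | m + 2 =>
    simp only [LamL, List.toFinset_cons, ← hL, hxb, hxa, hya, hyb]
    exact ring_key _ _ _ _ _ _ _ h1 h2

lemma LamL_perm {l₁ l₂ : List (Fin n)} (h : l₁.Perm l₂) :
    l₁.Nodup → ∀ m : ℕ, LamL k n m l₁ = LamL k n m l₂ := by
  induction h with
  | nil => intro _ _; rfl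
  | cons a h ih =>
    intro hnd m
    match m with
    | 0 => rfl
    | m + 1 =>
      simp only [LamL, List.toFinset_eq_of_perm _ _ h, ih hnd.of_cons (m + 1), ih hnd.of_cons m]
  | swap a b l =>
    intro hnd m
    simp only [List.nodup_cons, List.mem_cons, not_or] at hnd
    obtain ⟨⟨h1, h2⟩, h3, h4⟩ := hnd
    exact LamL_swap k n b a l h1 h2 h3 m
  | trans h₁ h₂ ih₁ ih₂ =>
    intro hnd m
    rw [ih₁ hnd m, ih₂ (h₁.nodup_iff.mp hnd) m]

lemma wd (m : ℕ) (l₁ l₂ : List (Fin n)) (h₁ : l₁.Nodup) (h₂ : l₂.Nodup)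
    (h : l₁.toFinset = l₂.toFinset) : LamL k n m l₁ = LamL k n m l₂ :=
  LamL_perm k n (perm_of_nodup_toFinset_eq n h₁ h₂ h) h₁ m

lemma list_toFinset_map (f : Fin n → Fin n) (l : List (Fin n)) :
    (l.map f).toFinset = l.toFinset.image f := by
  ext x; simp


section Phi
variable (σ : Equiv.Perm (Fin n)) (Φ : Q k n →ₐ[k] Q k n)
  (hΦ : ∀ (A : Finset (Fin n)) (i : Fin n), i ∉ A →
    Φ (z k n A i) = z k n (A.image σ) (σ i))

include hΦ

lemma Phi_rAux : ∀ (l : List (Fin n)) (s : Finset (Fin n)), l.Nodup → (∀ x ∈ l, x ∉ s) →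
    Φ (rAux k n s l) = rAux k n (s.image σ) (l.map σ)
  | [], s, _, _ => by simp [rAux]
  | a :: l, s, hnd, hdis => by
    simp only [rAux, map_add, List.map_cons]
    rw [hΦ s a (hdis a (by simp)),
      Phi_rAux l (insert a s) hnd.of_cons (fun x hx => by
        simp only [Finset.mem_insert, not_or]
        exact ⟨fun e => (List.nodup_cons.mp hnd).1 (e ▸ hx), hdis x (List.mem_cons_of_mem a hx)⟩),
      Finset.image_insert]

lemma Phi_rFin (A : Finset (Fin n)) : Φ (rFin k n A) = rFin k n (A.image σ) := by
  rw [rFin, Phi_rAux k n σ Φ hΦ _ ∅ (Finset.sort_nodup _ _) (by simp)]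
  rw [Finset.image_empty, rFin]
  apply rAux_perm k n _ ∅ ((Finset.sort_nodup _ _).map σ.injective) (by simp)
  apply perm_of_nodup_toFinset_eq n ((Finset.sort_nodup _ _).map σ.injective)
    (Finset.sort_nodup _ _)
  simp [list_toFinset_map]

lemma Phi_LamL : ∀ (l : List (Fin n)) (m : ℕ), Φ (LamL k n m l) = LamL k n m (l.map σ)
  | l, 0 => by simp [LamL]
  | [], m + 1 => by simp [LamL]
  | a :: l, m + 1 => by
    simp only [LamL, map_add, map_mul, map_sub, List.map_cons, list_toFinset_map n,
      Phi_rFin k n σ Φ hΦ, Phi_LamL l (m + 1), Phi_LamL l m,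
      Finset.image_insert]

end Phi

/-- `Λ_m(A)` is well defined (independent of the order in which the elements of `A`
are added), and is invariant under any permutation `σ` stabilizing `A`. -/
theorem stmt11 (k : Type) [Field k] (n : ℕ) :
    (∀ (m : ℕ) (l₁ l₂ : List (Fin n)), l₁.Nodup → l₂.Nodup →
      l₁.toFinset = l₂.toFinset → LamL k n m l₁ = LamL k n m l₂) ∧
    (∀ (σ : Equiv.Perm (Fin n)) (Φ : Q k n →ₐ[k] Q k n),
      (∀ (A : Finset (Fin n)) (i : Fin n), i ∉ A →
        Φ (z k n A i) = z k n (A.image σ) (σ i)) →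
      ∀ (m : ℕ) (A : Finset (Fin n)), A.image σ = A → Φ (Lam k n m A) = Lam k n m A) := by
  constructor
  · exact fun m l₁ l₂ h₁ h₂ h => wd k n m l₁ l₂ h₁ h₂ h
  · intro σ Φ hΦ m A hA
    rw [Lam, Phi_LamL k n σ Φ hΦ _ m]
    exact wd k n m _ _ ((Finset.sort_nodup _ _).map σ.injective) (Finset.sort_nodup _ _)
      (by simp [list_toFinset_map, hA])
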